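/- arXiv:2007.09232 — 5 statements merged into one kernel-verified Lean document; each statement's English description precedes it below -/
import Mathlib

section
/- Suppose cos(α+θ) ≠ 0, cos(α+2θ) ≠ 0, cos(α+3θ) ≠ 0, sin(α+3θ) ≠ 0, and tan(α+θ) ≠ tan(α+3θ). Then the point x_FP = ℓ·(tan(α+θ) − tan(α+2θ))/(tan(α+θ) − tan(α+3θ)) is a fixed point of the three-bounce return map: F(x_FP) = x_FP. -/
open Real

/-- The three-bounce return map of the bouncing robot. -/
noncomputable def bounceMap (ℓ α θ x : ℝ) : ℝ :=
  ((ℓ - x) * Real.tan (π - θ - α) + ℓ * Real.cot (3 * π / 2 - 2 * θ - α)) *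
    Real.tan (3 * π / 2 - α - 3 * θ)

lemma cot_three_pi_div_two_sub (x : ℝ) :
    Real.cot (3 * π / 2 - x) = Real.tan x := by
  have h : 3 * π / 2 - x = π + (π / 2 - x) := by ring
  rw [Real.cot_eq_cos_div_sin, Real.tan_eq_sin_div_cos, h,
    Real.cos_add, Real.sin_add, Real.cos_pi, Real.sin_pi,
    Real.cos_pi_div_two_sub, Real.sin_pi_div_two_sub]
  ring_nf

lemma tan_three_pi_div_two_sub (x : ℝ) :
    Real.tan (3 * π / 2 - x) = Real.cos x / Real.sin x := by
  have h : 3 * π / 2 - x = π + (π / 2 - x) := by ring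
  rw [Real.tan_eq_sin_div_cos, h, Real.cos_add, Real.sin_add,
    Real.cos_pi, Real.sin_pi, Real.cos_pi_div_two_sub, Real.sin_pi_div_two_sub]
  ring_nf

theorem bounceMap_fixed_point (ℓ α θ : ℝ)
    (h1 : Real.cos (α + θ) ≠ 0) (h2 : Real.cos (α + 2 * θ) ≠ 0)
    (h3 : Real.cos (α + 3 * θ) ≠ 0) (h4 : Real.sin (α + 3 * θ) ≠ 0)
    (h5 : Real.tan (α + θ) ≠ Real.tan (α + 3 * θ)) :
    bounceMap ℓ α θ
        (ℓ * (Real.tan (α + θ) - Real.tan (α + 2 * θ)) /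
          (Real.tan (α + θ) - Real.tan (α + 3 * θ))) =
      ℓ * (Real.tan (α + θ) - Real.tan (α + 2 * θ)) /
        (Real.tan (α + θ) - Real.tan (α + 3 * θ)) := by
  have e1 : Real.tan (π - θ - α) = - Real.tan (α + θ) := by
    rw [show π - θ - α = π - (α + θ) by ring, Real.tan_pi_sub]
  have e2 : Real.cot (3 * π / 2 - 2 * θ - α) = Real.tan (α + 2 * θ) := by
    rw [show 3 * π / 2 - 2 * θ - α = 3 * π / 2 - (α + 2 * θ) by ring,
      cot_three_pi_div_two_sub]
  have e3 : Real.tan (3 * π / 2 - α - 3 * θ) =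
      Real.cos (α + 3 * θ) / Real.sin (α + 3 * θ) := by
    rw [show 3 * π / 2 - α - 3 * θ = 3 * π / 2 - (α + 3 * θ) by ring,
      tan_three_pi_div_two_sub]
  have hd : Real.tan (α + θ) - Real.tan (α + 3 * θ) ≠ 0 := sub_ne_zero.mpr h5
  unfold bounceMap
  rw [e1, e2, e3, Real.tan_eq_sin_div_cos (α + 3 * θ)] at *
  set t1 := Real.tan (α + θ)
  set t2 := Real.tan (α + 2 * θ)
  set s := Real.sin (α + 3 * θ)
  set c := Real.cos (α + 3 * θ)
  have hd2 : t1 * c - s ≠ 0 := by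
    intro h
    apply hd
    field_simp
    linarith
  field_simp
  ring
end

section
/- Suppose cos(α+θ) ≠ 0, cos(α+2θ) ≠ 0, cos(α+3θ) ≠ 0, sin(α+3θ) ≠ 0, and tan(α+θ) ≠ tan(α+3θ). Then x_FP = ℓ·(tan(α+θ) − tan(α+2θ))/(tan(α+θ) − tan(α+3θ)) is the UNIQUE fixed point of the three-bounce return map F; that is, for every real x, F(x) = x implies x = x_FP. -/
open Real

theorem bounceMap_fixed_point_unique (ℓ α θ : ℝ)
    (h1 : Real.cos (α + θ) ≠ 0) (h2 : Real.cos (α + 2 * θ) ≠ 0)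
    (h3 : Real.cos (α + 3 * θ) ≠ 0) (h4 : Real.sin (α + 3 * θ) ≠ 0)
    (h5 : Real.tan (α + θ) ≠ Real.tan (α + 3 * θ)) :
    ∀ x : ℝ, bounceMap ℓ α θ x = x →
      x = ℓ * (Real.tan (α + θ) - Real.tan (α + 2 * θ)) /
            (Real.tan (α + θ) - Real.tan (α + 3 * θ)) := by
  intro x hx
  have e1 : Real.tan (π - θ - α) = - Real.tan (α + θ) := by
    rw [show π - θ - α = π - (α + θ) by ring, Real.tan_pi_sub]
  have c2 : Real.cos (3 * π / 2 - 2 * θ - α) = - Real.sin (α + 2 * θ) := by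
    rw [show 3 * π / 2 - 2 * θ - α = π - ((α + 2 * θ) - π / 2) by ring,
      Real.cos_pi_sub, Real.cos_sub]
    simp
  have s2 : Real.sin (3 * π / 2 - 2 * θ - α) = - Real.cos (α + 2 * θ) := by
    rw [show 3 * π / 2 - 2 * θ - α = π - ((α + 2 * θ) - π / 2) by ring,
      Real.sin_pi_sub, Real.sin_sub]
    simp
  have e2 : Real.cot (3 * π / 2 - 2 * θ - α) = Real.tan (α + 2 * θ) := by
    rw [Real.cot_eq_cos_div_sin, Real.tan_eq_sin_div_cos, c2, s2, neg_div_neg_eq]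
  have c3 : Real.cos (3 * π / 2 - α - 3 * θ) = - Real.sin (α + 3 * θ) := by
    rw [show 3 * π / 2 - α - 3 * θ = π - ((α + 3 * θ) - π / 2) by ring,
      Real.cos_pi_sub, Real.cos_sub]
    simp
  have s3 : Real.sin (3 * π / 2 - α - 3 * θ) = - Real.cos (α + 3 * θ) := by
    rw [show 3 * π / 2 - α - 3 * θ = π - ((α + 3 * θ) - π / 2) by ring,
      Real.sin_pi_sub, Real.sin_sub]
    simp
  have e3 : Real.tan (3 * π / 2 - α - 3 * θ) =
      Real.cos (α + 3 * θ) / Real.sin (α + 3 * θ) := by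
    rw [Real.tan_eq_sin_div_cos, c3, s3, neg_div_neg_eq]
  rw [bounceMap, e1, e2, e3] at hx
  have h5' : Real.tan (α + θ) - Real.tan (α + 3 * θ) ≠ 0 := sub_ne_zero.mpr h5
  rw [eq_div_iff h5']
  simp only [Real.tan_eq_sin_div_cos] at hx ⊢
  have h2' : Real.cos (α + θ * 2) ≠ 0 := by rwa [mul_comm θ 2]
  have h3' : Real.cos (α + θ * 3) ≠ 0 := by rwa [mul_comm θ 3]
  have h4' : Real.sin (α + θ * 3) ≠ 0 := by rwa [mul_comm θ 3]
  field_simp at hx ⊢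
  linear_combination hx
end

section
/- Suppose cos(α+θ) ≠ 0, cos(α+2θ) ≠ 0, cos(α+3θ) ≠ 0, sin(α+3θ) ≠ 0, and tan(α+θ) ≠ tan(α+3θ), and let x_FP = ℓ·(tan(α+θ) − tan(α+2θ))/(tan(α+θ) − tan(α+3θ)) and J = tan(α+θ)·cot(α+3θ). Then for every initial condition x₀ ∈ ℝ, the orbit defined by x_{n+1} = F(x_n) satisfies the exact formula x_n − x_FP = Jⁿ·(x₀ − x_FP) for every n ∈ ℕ. -/
open Real

lemma cos_three_pi_div_two_sub (y : ℝ) : Real.cos (3 * π / 2 - y) = -Real.sin y := by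
  have : 3 * π / 2 - y = π + (π / 2 - y) := by ring
  rw [this, Real.cos_add, Real.cos_pi, Real.sin_pi, Real.cos_pi_div_two_sub]; ring

lemma sin_three_pi_div_two_sub (y : ℝ) : Real.sin (3 * π / 2 - y) = -Real.cos y := by
  have : 3 * π / 2 - y = π + (π / 2 - y) := by
    ring
  rw [this, Real.sin_add, Real.cos_pi, Real.sin_pi, Real.sin_pi_div_two_sub]; ring

theorem bounceMap_orbit_formula (ℓ α θ : ℝ)
    (h1 : Real.cos (α + θ) ≠ 0) (h2 : Real.cos (α + 2 * θ) ≠ 0)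
    (h3 : Real.cos (α + 3 * θ) ≠ 0) (h4 : Real.sin (α + 3 * θ) ≠ 0)
    (h5 : Real.tan (α + θ) ≠ Real.tan (α + 3 * θ))
    (xFP J : ℝ)
    (hFP : xFP = ℓ * (Real.tan (α + θ) - Real.tan (α + 2 * θ)) /
            (Real.tan (α + θ) - Real.tan (α + 3 * θ)))
    (hJ : J = Real.tan (α + θ) * Real.cot (α + 3 * θ))
    (x : ℕ → ℝ) (hx : ∀ n : ℕ, x (n + 1) = bounceMap ℓ α θ (x n)) :
    ∀ n : ℕ, x n - xFP = J ^ n * (x 0 - xFP) := by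
  have key : ∀ y : ℝ, bounceMap ℓ α θ y - xFP = J * (y - xFP) := by
    intro y
    have e1 : π - θ - α = π - (α + θ) := by ring
    have e2 : 3 * π / 2 - 2 * θ - α = 3 * π / 2 - (α + 2 * θ) := by ring
    have e3 : 3 * π / 2 - α - 3 * θ = 3 * π / 2 - (α + 3 * θ) := by ring
    have ht1 : Real.tan (π - θ - α) = -Real.tan (α + θ) := by
      rw [e1, Real.tan_pi_sub]
    have ht2 : Real.cot (3 * π / 2 - 2 * θ - α) = Real.tan (α + 2 * θ) := by
      rw [e2, Real.cot_eq_cos_div_sin, cos_three_pi_div_two_sub, sin_three_pi_div_two_sub,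
        Real.tan_eq_sin_div_cos, neg_div_neg_eq]
    have ht3 : Real.tan (3 * π / 2 - α - 3 * θ) = Real.cot (α + 3 * θ) := by
      rw [e3, Real.tan_eq_sin_div_cos, cos_three_pi_div_two_sub, sin_three_pi_div_two_sub,
        Real.cot_eq_cos_div_sin, neg_div_neg_eq]
    have hd : Real.tan (α + θ) - Real.tan (α + 3 * θ) ≠ 0 := sub_ne_zero.mpr h5
    rw [bounceMap, ht1, ht2, ht3, hFP, hJ, Real.cot_eq_cos_div_sin,
      Real.tan_eq_sin_div_cos (α + θ), Real.tan_eq_sin_div_cos (α + 2 * θ),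
      Real.tan_eq_sin_div_cos (α + 3 * θ)]
    rw [Real.tan_eq_sin_div_cos (α + θ), Real.tan_eq_sin_div_cos (α + 3 * θ),
      div_sub_div _ _ h1 h3, div_ne_zero_iff] at hd
    have hD : Real.sin (α + θ) * Real.cos (α + 3 * θ) - Real.cos (α + θ) * Real.sin (α + 3 * θ) ≠ 0 := hd.1
    have h2' : Real.cos (α + θ * 2) ≠ 0 := by rwa [mul_comm θ 2]
    have h3' : Real.cos (α + θ * 3) ≠ 0 := by rwa [mul_comm θ 3]
    have h4' : Real.sin (α + θ * 3) ≠ 0 := by rwa [mul_comm θ 3]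
    have hD' : Real.sin (α + θ) * Real.cos (α + θ * 3) - Real.cos (α + θ) * Real.sin (α + θ * 3) ≠ 0 := by
      rwa [mul_comm θ 3]
    field_simp [hD, h2', h3', h4', hD']
    ring
  intro n
  induction n with
  | zero => simp
  | succ n ih =>
    rw [hx n, key (x n), ih, pow_succ]
    ring
end

section
/- For all real ℓ, α, θ and all real x, x′, the three-bounce return map satisfies |F(x) − F(x′)| = |tan(α+θ)·cot(α+3θ)|·|x − x′|; in particular, when |tan(α+θ)·cot(α+3θ)| < 1 the map F is a contraction of ℝ with contraction constant |tan(α+θ)·cot(α+3θ)|. -/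
open Real

lemma cot_eq_inv_tan' (x : ℝ) : Real.cot x = (Real.tan x)⁻¹ := by
  rw [Real.cot_eq_cos_div_sin, Real.tan_eq_sin_div_cos, inv_div]

lemma bounceMap_sub (ℓ α θ x x' : ℝ) :
    bounceMap ℓ α θ x - bounceMap ℓ α θ x' =
      Real.tan (α + θ) * Real.cot (α + 3 * θ) * (x - x') := by
  have h1 : Real.tan (π - θ - α) = -Real.tan (α + θ) := by
    have : π - θ - α = π - (α + θ) := by ring
    rw [this, Real.tan_pi_sub]
  have h2 : Real.tan (3 * π / 2 - α - 3 * θ) = Real.cot (α + 3 * θ) := by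
    have : 3 * π / 2 - α - 3 * θ = (π / 2 - (α + 3 * θ)) + π := by ring
    rw [this, Real.tan_add_pi, Real.tan_pi_div_two_sub, cot_eq_inv_tan']
  simp only [bounceMap, h1, h2]
  ring

theorem bounceMap_lipschitz (ℓ α θ : ℝ) :
    (∀ x x' : ℝ, |bounceMap ℓ α θ x - bounceMap ℓ α θ x'| =
      |Real.tan (α + θ) * Real.cot (α + 3 * θ)| * |x - x'|) ∧
    (|Real.tan (α + θ) * Real.cot (α + 3 * θ)| < 1 →
      ContractingWith ⟨|Real.tan (α + θ) * Real.cot (α + 3 * θ)|, abs_nonneg _⟩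
        (bounceMap ℓ α θ)) := by
  have key : ∀ x x' : ℝ, |bounceMap ℓ α θ x - bounceMap ℓ α θ x'| =
      |Real.tan (α + θ) * Real.cot (α + 3 * θ)| * |x - x'| := by
    intro x x'
    rw [bounceMap_sub, abs_mul]
  refine ⟨key, fun h => ⟨?_, ?_⟩⟩
  · exact_mod_cast h
  · apply LipschitzWith.of_dist_le_mul
    intro x x'
    simp only [Real.dist_eq]
    rw [key x x']
    norm_num
    exact le_rfl
end

section
/- Specializing the rotation angle to θ = π/3 (the equiangular-triangle case): if sin α ≠ 0, cos α ≠ 0, cos(α+π/3) ≠ 0, cos(α+2π/3) ≠ 0, and tan(α+π/3) ≠ tan α, then the three-bounce return map F with θ = π/3 has the fixed point x_FP = ℓ·(tan(α+π/3) − tan(α+2π/3))/(tan(α+π/3) − tan α), where the denominator uses the identity tan(α+π) = tan α. -/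
open Real

lemma aux (ℓ t0 t1 t2 : ℝ) (h : t0 ≠ 0) (hd : t1 - t0 ≠ 0) :
    ((ℓ - ℓ * (t1 - t2) / (t1 - t0)) * -t1 + ℓ * t2) * t0⁻¹ =
      ℓ * (t1 - t2) / (t1 - t0) := by
  field_simp
  ring

theorem bounceMap_fixed_point_equiangular (ℓ α : ℝ)
    (h0 : Real.sin α ≠ 0) (h1 : Real.cos α ≠ 0)
    (h2 : Real.cos (α + π / 3) ≠ 0) (h3 : Real.cos (α + 2 * π / 3) ≠ 0)
    (h5 : Real.tan (α + π / 3) ≠ Real.tan α) :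
    bounceMap ℓ α (π / 3)
        (ℓ * (Real.tan (α + π / 3) - Real.tan (α + 2 * π / 3)) /
          (Real.tan (α + π / 3) - Real.tan α)) =
      ℓ * (Real.tan (α + π / 3) - Real.tan (α + 2 * π / 3)) /
        (Real.tan (α + π / 3) - Real.tan α) := by
  have ht0 : Real.tan α ≠ 0 := by
    rw [Real.tan_eq_sin_div_cos]
    exact div_ne_zero h0 h1
  have hden : Real.tan (α + π / 3) - Real.tan α ≠ 0 := sub_ne_zero.mpr h5
  have e1 : Real.tan (π - π / 3 - α) = - Real.tan (α + π / 3) := by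
    rw [show π - π / 3 - α = -(α + π / 3) + π by ring, Real.tan_add_pi, Real.tan_neg]
  have e2 : Real.cot (3 * π / 2 - 2 * (π / 3) - α) = Real.tan (α + 2 * π / 3) := by
    rw [Real.cot_eq_cos_div_sin,
      show 3 * π / 2 - 2 * (π / 3) - α = π / 2 - (α - π / 3) by ring,
      Real.cos_pi_div_two_sub, Real.sin_pi_div_two_sub,
      show α + 2 * π / 3 = (α - π / 3) + π by ring, Real.tan_add_pi,
      Real.tan_eq_sin_div_cos]
  have e3 : Real.tan (3 * π / 2 - α - 3 * (π / 3)) = (Real.tan α)⁻¹ := by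
    rw [show 3 * π / 2 - α - 3 * (π / 3) = π / 2 - α by ring, Real.tan_pi_div_two_sub]
  unfold bounceMap
  rw [e1, e2, e3]
  exact aux ℓ (Real.tan α) (Real.tan (α + π / 3)) (Real.tan (α + 2 * π / 3)) ht0 hden
end
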